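/- Let 1 ≤ l ≤ m ≤ n, let e_1,…,e_l be an orthonormal basis of X ∈ G(n,l), and let h_1,…,h_l ∈ ℝ^n with |h_i − e_i| < ε < ε₁ := 10^{-1}(10^m+1)^{-1}. If Y = span(h_1,…,h_l), then ∠(X,Y) ≤ c₂ ε, where c₂ = 4m(10^m+1) and ∠(X,Y) = ‖π_X − π_Y‖ is the operator-norm distance between the orthogonal projections onto X and Y. -/

import Mathlib

open Finset Submodule

instance angleAux_finWFLT (l : ℕ) : WellFoundedLT (Fin l) := inferInstance

section AngleAux

variable {F : Type*} [NormedAddCommGroup F] [InnerProductSpace ℝ F]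

lemma angleAux_normalize_sub {x e : F} (he : ‖e‖ = 1) (hx : x ≠ 0) :
    ‖‖x‖⁻¹ • x - e‖ ≤ 2 * ‖x - e‖ := by
  have hnx : ‖x‖ ≠ 0 := norm_ne_zero_iff.2 hx
  have h1 : ‖x‖⁻¹ • x - x = (‖x‖⁻¹ - 1) • x := by
    rw [sub_smul, one_smul]
  calc ‖‖x‖⁻¹ • x - e‖ ≤ ‖‖x‖⁻¹ • x - x‖ + ‖x - e‖ := by
        have h := norm_add_le (‖x‖⁻¹ • x - x) (x - e)
        rw [sub_add_sub_cancel] at h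
        exact h
    _ ≤ 2 * ‖x - e‖ := by
        rw [h1, norm_smul]
        have : |‖x‖⁻¹ - 1| * ‖x‖ = |1 - ‖x‖| := by
          rw [← abs_of_nonneg (norm_nonneg x), ← abs_mul]
          congr 1
          rw [abs_norm, sub_mul, inv_mul_cancel₀ hnx, one_mul]
        rw [Real.norm_eq_abs, this]
        have h2 : |1 - ‖x‖| ≤ ‖x - e‖ := by
          rw [← he]
          have := abs_norm_sub_norm_le e x
          rw [norm_sub_rev] at this
          simpa [abs_sub_comm] using this
        linarith

/-- The rank-one operator `x ↦ ⟪v,x⟫ • v`. -/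
noncomputable def angleAux_rk1 (v : F) : F →L[ℝ] F := (innerSL ℝ v).smulRight v

lemma angleAux_rk1_apply (v x : F) : angleAux_rk1 v x = (inner ℝ v x : ℝ) • v := rfl

lemma angleAux_rk1_sub_norm_le (a b : F) :
    ‖angleAux_rk1 a - angleAux_rk1 b‖ ≤ (‖a‖ + ‖b‖) * ‖a - b‖ := by
  refine ContinuousLinearMap.opNorm_le_bound _ (by positivity) fun x => ?_
  have : (angleAux_rk1 a - angleAux_rk1 b) x
      = (inner ℝ (a - b) x : ℝ) • a + (inner ℝ b x : ℝ) • (a - b) := by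
    simp only [ContinuousLinearMap.sub_apply, angleAux_rk1_apply, inner_sub_left, sub_smul,
      smul_sub]
    abel
  rw [this]
  calc ‖(inner ℝ (a-b) x : ℝ) • a + (inner ℝ b x : ℝ) • (a-b)‖
      ≤ ‖(inner ℝ (a-b) x : ℝ) • a‖ + ‖(inner ℝ b x : ℝ) • (a-b)‖ := norm_add_le _ _
    _ ≤ ‖a-b‖*‖x‖*‖a‖ + ‖b‖*‖x‖*‖a-b‖ := by
        gcongr
        · rw [norm_smul]; gcongr; exact (abs_real_inner_le_norm _ _)
        · rw [norm_smul]; gcongr; exact (abs_real_inner_le_norm _ _)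
    _ = (‖a‖ + ‖b‖) * ‖a - b‖ * ‖x‖ := by ring

lemma angleAux_nat_le_pow (N : ℕ) : (N : ℝ) + 1 ≤ 10 ^ N := by
  induction N with
  | zero => norm_num
  | succ N ih =>
    push_cast
    rw [pow_succ]
    nlinarith [pow_pos (show (0:ℝ)<10 by norm_num) N]

lemma angleAux_geom (N : ℕ) : ∑ k ∈ Finset.range N, (10:ℝ)^(k+1) ≤ 10^(N+1)/9 := by
  induction N with
  | zero => norm_num
  | succ N ih =>
    rw [Finset.sum_range_succ]
    have : (10:ℝ)^(N+1+1) = 10 * 10^(N+1) := by ring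
    nlinarith [pow_pos (show (0:ℝ)<10 by norm_num) (N+1)]

lemma angleAux_sum_transfer {l : ℕ} (g : ℕ → ℝ) (i : Fin l) :
    ∑ j ∈ Finset.Iio i, g (j:ℕ) = ∑ k ∈ Finset.range (i:ℕ), g k := by
  rw [← Nat.Iio_eq_range, ← Fin.map_valEmbedding_Iio, Finset.sum_map]
  rfl

end AngleAux

/-- The orthogonal projection onto a subspace of Euclidean space, viewed as a
continuous linear endomorphism of the ambient space. -/
noncomputable def projL {n : ℕ} (X : Submodule ℝ (EuclideanSpace ℝ (Fin n))) :
    EuclideanSpace ℝ (Fin n) →L[ℝ] EuclideanSpace ℝ (Fin n) :=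
  X.subtypeL.comp X.orthogonalProjection

lemma projL_eq_sum_rk1 {n l : ℕ} (f : Fin l → EuclideanSpace ℝ (Fin n))
    (hf : Orthonormal ℝ f) (Y : Submodule ℝ (EuclideanSpace ℝ (Fin n)))
    (hY : Y = Submodule.span ℝ (Set.range f)) :
    projL Y = ∑ i, angleAux_rk1 (f i) := by
  refine ContinuousLinearMap.ext fun x => ?_
  have hmem : (∑ i, angleAux_rk1 (f i)) x ∈ Y := by
    rw [ContinuousLinearMap.sum_apply, hY]
    exact Submodule.sum_mem _ fun i _ =>
      Submodule.smul_mem _ _ (Submodule.subset_span (Set.mem_range_self i))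
  have horth : ∀ w ∈ Y, (inner ℝ (x - (∑ i, angleAux_rk1 (f i)) x) w : ℝ) = 0 := by
    intro w hw
    rw [hY] at hw
    induction hw using Submodule.span_induction with
    | mem w hw =>
      obtain ⟨j, rfl⟩ := hw
      rw [inner_sub_left, ContinuousLinearMap.sum_apply, sum_inner]
      have : ∀ i, (inner ℝ (angleAux_rk1 (f i) x) (f j) : ℝ)
          = if i = j then (inner ℝ x (f j) : ℝ) else 0 := by
        intro i
        rw [angleAux_rk1_apply, real_inner_smul_left, orthonormal_iff_ite.1 hf i j]
        by_cases hij : i = j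
        · subst hij; rw [if_pos rfl, if_pos rfl, mul_one, real_inner_comm]
        · rw [if_neg hij, if_neg hij, mul_zero]
      rw [Finset.sum_congr rfl fun i _ => this i, Finset.sum_ite_eq' Finset.univ j
        (fun _ => (inner ℝ x (f j) : ℝ))]
      simp
    | zero => simp
    | add w₁ w₂ _ _ ih1 ih2 => rw [inner_add_right, ih1, ih2, add_zero]
    | smul c w _ ih => rw [real_inner_smul_right, ih, mul_zero]
  have h2 := eq_starProjection_of_mem_of_inner_eq_zero (K := Y) hmem horth
  show (Y.subtypeL.comp (orthogonalProjection Y)) x = _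
  exact h2

set_option maxHeartbeats 2000000 in
/-- If `h_1, …, h_l` are `ε`-perturbations of an orthonormal basis `e_1, …, e_l` of
`X ∈ G(n,l)` with `ε < ε₁ = 1/(10(10^m+1))` and `Y = span(h_1, …, h_l)`, then
`∠(X,Y) = ‖π_X − π_Y‖ ≤ c₂ ε` with `c₂ = 4m(10^m+1)`. -/
theorem angle_span_perturbation {n m l : ℕ}
    (hl : 1 ≤ l) (hlm : l ≤ m) (hmn : m ≤ n)
    (X : Submodule ℝ (EuclideanSpace ℝ (Fin n))) (hX : Module.finrank ℝ X = l)
    (e : Fin l → EuclideanSpace ℝ (Fin n)) (he : Orthonormal ℝ e)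
    (heX : Submodule.span ℝ (Set.range e) = X)
    (h : Fin l → EuclideanSpace ℝ (Fin n)) (ε : ℝ)
    (hε : ε < 10⁻¹ * ((10 : ℝ) ^ m + 1)⁻¹)
    (hhe : ∀ i, ‖h i - e i‖ < ε)
    (Y : Submodule ℝ (EuclideanSpace ℝ (Fin n)))
    (hY : Y = Submodule.span ℝ (Set.range h)) :
    ‖projL X - projL Y‖ ≤ 4 * m * ((10 : ℝ) ^ m + 1) * ε := by
  -- basic positivity and size facts
  have hm : 1 ≤ m := le_trans hl hlm
  have hε0 : 0 < ε := lt_of_le_of_lt (norm_nonneg _) (hhe ⟨0, hl⟩)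
  have hpm : (10:ℝ) ≤ 10 ^ m := by
    calc (10:ℝ) = 10 ^ 1 := (pow_one _).symm
    _ ≤ 10 ^ m := pow_le_pow_right₀ (by norm_num) hm
  have hε110 : ε ≤ 1 / 110 := by
    have h1 : ((10:ℝ) ^ m + 1)⁻¹ ≤ 11⁻¹ := by
      apply inv_anti₀ (by norm_num)
      linarith
    have := hε.le.trans (by nlinarith [h1] : 10⁻¹ * ((10:ℝ) ^ m + 1)⁻¹ ≤ 1/110)
    exact this
  have hpow_m : ∀ i : Fin l, (10:ℝ) ^ ((i:ℕ)+1) ≤ 10 ^ m := fun i =>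
    pow_le_pow_right₀ (by norm_num) (by omega)
  have hpow_small : ∀ i : Fin l, (10:ℝ) ^ ((i:ℕ)+1) * ε ≤ 1/10 := by
    intro i
    have h1 : (10:ℝ) ^ ((i:ℕ)+1) * ε ≤ 10 ^ m * (10⁻¹ * ((10:ℝ) ^ m + 1)⁻¹) := by
      have := hpow_m i
      have hp : (0:ℝ) < 10 ^ ((i:ℕ)+1) := by positivity
      nlinarith [hε.le, hε0.le, pow_pos (show (0:ℝ)<10 by norm_num) m]
    have h2 : (10:ℝ) ^ m * (10⁻¹ * ((10:ℝ)^m + 1)⁻¹) ≤ 1/10 := by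
      have hp : (0:ℝ) < 10 ^ m := by positivity
      have hq : (0:ℝ) < 10 ^ m + 1 := by positivity
      rw [show (10:ℝ)⁻¹ * ((10:ℝ)^m + 1)⁻¹ = 1 / (10 * (10^m+1)) by
        rw [one_div, mul_inv]]
      rw [mul_one_div, div_le_div_iff₀ (by positivity) (by norm_num)]
      linarith
    linarith
  have he1 : ∀ i, ‖e i‖ = 1 := he.1
  have hhn : ∀ i, ‖h i‖ ≤ 1 + ε := by
    intro i
    calc ‖h i‖ = ‖e i + (h i - e i)‖ := by rw [add_sub_cancel]
    _ ≤ ‖e i‖ + ‖h i - e i‖ := norm_add_le _ _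
    _ ≤ 1 + ε := by rw [he1 i]; linarith [(hhe i).le]
  set u : Fin l → EuclideanSpace ℝ (Fin n) := InnerProductSpace.gramSchmidt ℝ h with hu
  set f : Fin l → EuclideanSpace ℝ (Fin n) := InnerProductSpace.gramSchmidtNormed ℝ h with hf
  have hfu : ∀ i, f i = ‖u i‖⁻¹ • u i := fun i => rfl
  -- conditional consequences of the key bound at one index
  have hune : ∀ i : Fin l, ‖u i - e i‖ ≤ 1/2 * 10 ^ ((i:ℕ)+1) * ε → u i ≠ 0 := by
    intro i hb hzero
    rw [hzero] at hb
    rw [zero_sub, norm_neg, he1 i] at hb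
    nlinarith [hpow_small i]
  have hD : ∀ i : Fin l, ‖u i - e i‖ ≤ 1/2 * 10 ^ ((i:ℕ)+1) * ε →
      ‖f i - e i‖ ≤ 10 ^ ((i:ℕ)+1) * ε := by
    intro i hb
    have := angleAux_normalize_sub (he1 i) (hune i hb)
    rw [← hfu i] at this
    linarith
  have hfnorm : ∀ i : Fin l, ‖u i - e i‖ ≤ 1/2 * 10 ^ ((i:ℕ)+1) * ε → ‖f i‖ = 1 := by
    intro i hb
    have hnz : ‖u i‖ ≠ 0 := norm_ne_zero_iff.2 (hune i hb)
    rw [hfu i, norm_smul, Real.norm_eq_abs, abs_of_nonneg (inv_nonneg.2 (norm_nonneg _)),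
      inv_mul_cancel₀ hnz]
  -- the key Gram–Schmidt stability bound
  have step : ∀ i : Fin l,
      (∀ j : Fin l, j < i → ‖u j - e j‖ ≤ 1/2 * 10 ^ ((j:ℕ)+1) * ε) →
      ‖u i - e i‖ ≤ 1/2 * 10 ^ ((i:ℕ)+1) * ε := by
    intro i ih
    have hterm : ∀ j ∈ Finset.Iio i,
        ‖(ℝ ∙ u j).starProjection (h i)‖
          ≤ (10 ^ ((j:ℕ)+1) * (1+ε) + 1) * ε := by
      intro j hj
      rw [Finset.mem_Iio] at hj
      have hbj := ih j hj
      have huj := hune j hbj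
      have hDj := hD j hbj
      have hfj1 := hfnorm j hbj
      have hproj : (ℝ ∙ u j).starProjection (h i)
          = (inner ℝ (f j) (h i) : ℝ) • f j := by
        rw [starProjection_singleton ℝ, hfu j, real_inner_smul_left, smul_smul]
        congr 1
        push_cast
        rw [div_eq_mul_inv, pow_two, mul_inv]
        simp only [RCLike.ofReal_real_eq_id, id_eq]
        ring
      rw [hproj, norm_smul, Real.norm_eq_abs, hfj1, mul_one]
      have hsplit : (inner ℝ (f j) (h i) : ℝ)
          = inner ℝ (f j - e j) (h i) + inner ℝ (e j) (h i - e i) := by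
        have h0 : (inner ℝ (e j) (e i) : ℝ) = 0 := he.2 (ne_of_lt hj)
        rw [inner_sub_left, inner_sub_right, h0]
        ring
      rw [hsplit]
      calc |(inner ℝ (f j - e j) (h i) : ℝ) + inner ℝ (e j) (h i - e i)|
          ≤ |(inner ℝ (f j - e j) (h i) : ℝ)| + |(inner ℝ (e j) (h i - e i) : ℝ)| := abs_add_le _ _
        _ ≤ ‖f j - e j‖ * ‖h i‖ + ‖e j‖ * ‖h i - e i‖ := by
            gcongr <;> exact abs_real_inner_le_norm _ _
        _ ≤ (10 ^ ((j:ℕ)+1) * ε) * (1+ε) + 1 * ε := by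
            have hb1 : ‖f j - e j‖ * ‖h i‖ ≤ (10 ^ ((j:ℕ)+1) * ε) * (1+ε) :=
              mul_le_mul hDj (hhn i) (norm_nonneg _) (by positivity)
            have hb2 : ‖e j‖ * ‖h i - e i‖ ≤ 1 * ε := by
              rw [he1 j, one_mul, one_mul]; exact (hhe i).le
            linarith
        _ = (10 ^ ((j:ℕ)+1) * (1+ε) + 1) * ε := by ring
    have hdecomp : u i - e i = (h i - e i) - ∑ j ∈ Finset.Iio i,
        (ℝ ∙ u j).starProjection (h i) := by
      rw [hu, InnerProductSpace.gramSchmidt_def ℝ h i]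
      abel
    have hnorm1 : ‖u i - e i‖ ≤ ε + ∑ j ∈ Finset.Iio i, (10 ^ ((j:ℕ)+1) * (1+ε) + 1) * ε := by
      rw [hdecomp]
      calc ‖(h i - e i) - _‖ ≤ ‖h i - e i‖ + ‖∑ j ∈ Finset.Iio i,
            (ℝ ∙ u j).starProjection (h i)‖ := norm_sub_le _ _
        _ ≤ ε + ∑ j ∈ Finset.Iio i, (10 ^ ((j:ℕ)+1) * (1+ε) + 1) * ε := by
            gcongr
            · exact (hhe i).le
            · exact (norm_sum_le _ _).trans (Finset.sum_le_sum hterm)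
    have hsum : ∑ j ∈ Finset.Iio i, ((10:ℝ) ^ ((j:ℕ)+1) * (1+ε) + 1) * ε
        ≤ ((10 ^ ((i:ℕ)+1) / 9) * (1+ε) + (i:ℕ)) * ε := by
      rw [angleAux_sum_transfer (fun k => ((10:ℝ)^(k+1) * (1+ε) + 1) * ε) i]
      have hpt : ∀ k : ℕ, ((10:ℝ)^(k+1) * (1+ε) + 1) * ε = (10:ℝ)^(k+1) * ((1+ε) * ε) + ε :=
        fun k => by ring
      have hexp : ∑ k ∈ Finset.range (i:ℕ), ((10:ℝ)^(k+1) * (1+ε) + 1) * ε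
          = (∑ k ∈ Finset.range (i:ℕ), (10:ℝ)^(k+1)) * ((1+ε) * ε) + (i:ℕ) * ε := by
        simp_rw [hpt]
        rw [Finset.sum_add_distrib, ← Finset.sum_mul, Finset.sum_const, Finset.card_range,
          nsmul_eq_mul]
      rw [hexp]
      have hg := angleAux_geom (i:ℕ)
      have hmul := mul_le_mul_of_nonneg_right hg
        (by nlinarith : (0:ℝ) ≤ (1+ε) * ε)
      nlinarith [hmul]
    -- final arithmetic
    have harith : ε + ((10 ^ ((i:ℕ)+1) / 9) * (1+ε) + (i:ℕ)) * ε ≤ 1/2 * 10 ^ ((i:ℕ)+1) * ε := by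
      have hN := angleAux_nat_le_pow (i:ℕ)
      set P : ℝ := 10 ^ (i:ℕ) with hP
      have hP0 : (0:ℝ) < P := by positivity
      have hpp : (10:ℝ) ^ ((i:ℕ)+1) = 10 * P := by rw [hP, pow_succ]; ring
      rw [hpp]
      have hcoef : 1 + ((10 * P / 9) * (1+ε) + (i:ℕ)) ≤ 5 * P := by
        have hb : (10 * P / 9) * ε ≤ (10 * P / 9) * (1/110) :=
          mul_le_mul_of_nonneg_left hε110 (by positivity)
        nlinarith [hN, hP0]
      have := mul_le_mul_of_nonneg_right hcoef hε0.le
      nlinarith [this]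
    linarith
  have key : ∀ i : Fin l, ‖u i - e i‖ ≤ 1/2 * 10 ^ ((i:ℕ)+1) * ε := by
    have main : ∀ k : ℕ, ∀ i : Fin l, (i:ℕ) < k → ‖u i - e i‖ ≤ 1/2 * 10 ^ ((i:ℕ)+1) * ε := by
      intro k
      induction k with
      | zero => intro i hi; exact absurd hi (Nat.not_lt_zero _)
      | succ k ihk =>
        intro i hi
        exact step i fun j hj => ihk j (by
          have : (j:ℕ) < (i:ℕ) := hj
          omega)
    intro i
    exact main ((i:ℕ)+1) i (Nat.lt_succ_self _)
  -- consequences of key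
  have hDall : ∀ i : Fin l, ‖f i - e i‖ ≤ 10 ^ ((i:ℕ)+1) * ε := fun i => hD i (key i)
  have hfnormall : ∀ i : Fin l, ‖f i‖ = 1 := fun i => hfnorm i (key i)
  have huneall : ∀ i : Fin l, u i ≠ 0 := fun i => hune i (key i)
  -- f is orthonormal and spans Y
  have hforth : Orthonormal ℝ f := by
    constructor
    · exact hfnormall
    · intro i j hij
      rw [hfu i, hfu j, real_inner_smul_left, real_inner_smul_right,
        InnerProductSpace.gramSchmidt_orthogonal ℝ h hij, mul_zero, mul_zero]
  have hYf : Y = Submodule.span ℝ (Set.range f) := by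
    rw [hY, hf, InnerProductSpace.span_gramSchmidtNormed_range, InnerProductSpace.span_gramSchmidt]
  -- assemble
  have hPX : projL X = ∑ i, angleAux_rk1 (e i) := projL_eq_sum_rk1 e he X heX.symm
  have hPY : projL Y = ∑ i, angleAux_rk1 (f i) := projL_eq_sum_rk1 f hforth Y hYf
  rw [hPX, hPY, ← Finset.sum_sub_distrib]
  calc ‖∑ i, (angleAux_rk1 (e i) - angleAux_rk1 (f i))‖
      ≤ ∑ i : Fin l, ‖angleAux_rk1 (e i) - angleAux_rk1 (f i)‖ := norm_sum_le _ _
    _ ≤ ∑ i : Fin l, 2 * (10 ^ ((i:ℕ)+1) * ε) := by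
        apply Finset.sum_le_sum
        intro i _
        calc ‖angleAux_rk1 (e i) - angleAux_rk1 (f i)‖
            ≤ (‖e i‖ + ‖f i‖) * ‖e i - f i‖ := angleAux_rk1_sub_norm_le _ _
          _ = 2 * ‖f i - e i‖ := by rw [he1 i, hfnormall i, norm_sub_rev]; ring
          _ ≤ 2 * (10 ^ ((i:ℕ)+1) * ε) := by linarith [hDall i]
    _ ≤ 4 * m * ((10 : ℝ) ^ m + 1) * ε := by
        have hptw : ∀ i : Fin l, 2 * ((10:ℝ) ^ ((i:ℕ)+1) * ε) = (10:ℝ) ^ ((i:ℕ)+1) * (2*ε) :=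
          fun i => by ring
        simp_rw [hptw]
        rw [← Finset.sum_mul]
        have hsum : ∑ i : Fin l, (10:ℝ) ^ ((i:ℕ)+1) ≤ 10 ^ (l+1) / 9 := by
          rw [Fin.sum_univ_eq_sum_range (fun k => (10:ℝ)^(k+1)) l]
          exact angleAux_geom l
        have hlpow : (10:ℝ) ^ (l+1) ≤ 10 * 10 ^ m := by
          have hll : (10:ℝ)^l ≤ 10^m := pow_le_pow_right₀ (by norm_num) hlm
          calc (10:ℝ)^(l+1) = 10*10^l := by ring
          _ ≤ 10*10^m := by linarith
        have hm1 : (1:ℝ) ≤ m := by exact_mod_cast hm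
        have h1 : ∑ i : Fin l, (10:ℝ) ^ ((i:ℕ)+1) ≤ 10 * 10 ^ m / 9 := by linarith
        have h2 : (∑ i : Fin l, (10:ℝ) ^ ((i:ℕ)+1)) * (2*ε) ≤ (10 * 10 ^ m / 9) * (2*ε) :=
          mul_le_mul_of_nonneg_right h1 (by positivity)
        have hpm0 : (0:ℝ) < 10 ^ m := by positivity
        have h3 : (10:ℝ)^m ≤ m * (10^m + 1) := by nlinarith [mul_le_mul_of_nonneg_right hm1 hpm0.le]
        have h4 : (10:ℝ)^m * ε ≤ (m * (10^m+1)) * ε := mul_le_mul_of_nonneg_right h3 hε0.le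
        have hX : (0:ℝ) ≤ (m * (10^m+1)) * ε := by positivity
        nlinarith [h2, h4, hX]
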